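/- Let h₀ > 0 and θ_{h₀} the solution of θ' = √(sin²θ + 2h₀(1-cos θ)), θ(0) = π. Then for every ε ∈ (0, √(1+h₀)) there exists C > 0 such that θ_{h₀}(x) ≤ C e^{(√(1+h₀) - ε)x} for all x ≤ 0; in particular θ_{h₀}(x) → 0 exponentially as x → -∞. -/

import Mathlib

open Real Filter

theorem stmt7 (h₀ : ℝ) (h : 0 < h₀) (θ : ℝ → ℝ) (hθ : ContDiff ℝ 1 θ) (h0 : θ 0 = π)
    (hODE : ∀ x, deriv θ x = Real.sqrt (sin (θ x) ^ 2 + 2 * h₀ * (1 - cos (θ x))))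
    (hrange : ∀ x, 0 < θ x ∧ θ x < 2 * π) (hmono : StrictMono θ)
    (hlim : Tendsto θ atBot (nhds 0)) :
    ∀ ε ∈ Set.Ioo 0 (Real.sqrt (1 + h₀)), ∃ C > (0:ℝ), ∀ x ≤ (0:ℝ),
      θ x ≤ C * Real.exp ((Real.sqrt (1 + h₀) - ε) * x) := by
  intro ε hε
  obtain ⟨hε0, hεs⟩ := hε
  set s := Real.sqrt (1 + h₀) with hs
  have h1h : (0:ℝ) < 1 + h₀ := by linarith
  have hs0 : 0 < s := Real.sqrt_pos.mpr h1h
  have hssq : s ^ 2 = 1 + h₀ := Real.sq_sqrt h1h.le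
  set k := s - ε with hk
  have hk0 : 0 < k := by simp only [hk]; linarith
  set δ := min 1 (Real.sqrt (ε / s)) with hδ
  have hδ0 : 0 < δ := lt_min one_pos (Real.sqrt_pos.mpr (div_pos hε0 hs0))
  have hδ1 : δ ≤ 1 := min_le_left _ _
  have hδsq : s * δ ^ 2 ≤ ε := by
    have h1 : δ ^ 2 ≤ ε / s := by
      calc δ ^ 2 ≤ (Real.sqrt (ε / s)) ^ 2 :=
            pow_le_pow_left₀ hδ0.le (min_le_right _ _) 2
        _ = ε / s := Real.sq_sqrt (div_pos hε0 hs0).le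
    calc s * δ ^ 2 ≤ s * (ε / s) := by nlinarith
      _ = ε := by field_simp
  -- core pointwise inequality
  have key : ∀ y : ℝ, 0 < y → y ≤ δ →
      k * y ≤ Real.sqrt (Real.sin y ^ 2 + 2 * h₀ * (1 - Real.cos y)) := by
    intro y hy hyδ
    have hy1 : y ≤ 1 := hyδ.trans hδ1
    have hsin : y * (1 - y ^ 2 / 4) ≤ Real.sin y := by
      have := Real.sin_gt_sub_cube hy
      nlinarith
    have hq : (0:ℝ) ≤ 1 - y ^ 2 / 4 := by nlinarith
    have hsinpos : 0 ≤ y * (1 - y ^ 2 / 4) := by positivity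
    have hsinhalf : (y / 2) * (1 - y ^ 2 / 4) ≤ Real.sin (y / 2) := by
      have := Real.sin_gt_sub_cube (half_pos hy)
      nlinarith
    have hhalfpos : 0 ≤ (y / 2) * (1 - y ^ 2 / 4) := by positivity
    have hcos : 1 - Real.cos y = 2 * Real.sin (y / 2) ^ 2 := by
      have h1 := Real.cos_sq (y / 2)
      have h2 : 2 * (y / 2) = y := by ring
      rw [h2] at h1
      have h3 := Real.sin_sq_add_cos_sq (y / 2)
      linarith
    have hky : k ≤ s * (1 - y ^ 2 / 4) := by
      have hyd : y ^ 2 ≤ δ ^ 2 := pow_le_pow_left₀ hy.le hyδ 2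
      have : s * y ^ 2 ≤ ε := le_trans (by nlinarith) hδsq
      nlinarith
    have hsq : (k * y) ^ 2 ≤ Real.sin y ^ 2 + 2 * h₀ * (1 - Real.cos y) := by
      rw [hcos]
      have e1 : (y * (1 - y ^ 2 / 4)) ^ 2 ≤ Real.sin y ^ 2 :=
        pow_le_pow_left₀ hsinpos hsin 2
      have e2 : ((y / 2) * (1 - y ^ 2 / 4)) ^ 2 ≤ Real.sin (y / 2) ^ 2 :=
        pow_le_pow_left₀ hhalfpos hsinhalf 2
      have e3 : (k * y) ^ 2 ≤ (1 + h₀) * (y * (1 - y ^ 2 / 4)) ^ 2 := by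
        have e4 : k ^ 2 ≤ (s * (1 - y ^ 2 / 4)) ^ 2 := pow_le_pow_left₀ hk0.le hky 2
        calc (k * y) ^ 2 = k ^ 2 * y ^ 2 := by ring
          _ ≤ (s * (1 - y ^ 2 / 4)) ^ 2 * y ^ 2 :=
              mul_le_mul_of_nonneg_right e4 (sq_nonneg y)
          _ = s ^ 2 * (y * (1 - y ^ 2 / 4)) ^ 2 := by ring
          _ = (1 + h₀) * (y * (1 - y ^ 2 / 4)) ^ 2 := by rw [hssq]
      have e5 : h₀ * ((y / 2) * (1 - y ^ 2 / 4)) ^ 2 ≤ h₀ * Real.sin (y / 2) ^ 2 :=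
        mul_le_mul_of_nonneg_left e2 h.le
      have ering : (1 + h₀) * (y * (1 - y ^ 2 / 4)) ^ 2
          = (y * (1 - y ^ 2 / 4)) ^ 2 + 4 * (h₀ * ((y / 2) * (1 - y ^ 2 / 4)) ^ 2) := by
        ring
      linarith
    calc k * y = Real.sqrt ((k * y) ^ 2) :=
          (Real.sqrt_sq (by positivity)).symm
      _ ≤ _ := Real.sqrt_le_sqrt hsq
  -- find x₀ where θ is small
  obtain ⟨a, ha⟩ := Filter.eventually_atBot.mp (hlim.eventually (gt_mem_nhds hδ0))
  set x₀ := min a 0 with hx₀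
  have hx₀0 : x₀ ≤ 0 := min_le_right _ _
  have hsmall : ∀ x ≤ x₀, θ x < δ := fun x hx => ha x (hx.trans (min_le_left _ _))
  -- the Gronwall function
  set g : ℝ → ℝ := fun x => θ x * Real.exp (-k * x) with hg
  have hθdiff : Differentiable ℝ θ := hθ.differentiable one_ne_zero
  have hgderiv : ∀ x : ℝ, HasDerivAt g
      (deriv θ x * Real.exp (-k * x) + θ x * (Real.exp (-k * x) * (-k))) x := by
    intro x
    have h1 : HasDerivAt θ (deriv θ x) x := (hθdiff x).hasDerivAt
    have h2 : HasDerivAt (fun x : ℝ => Real.exp (-k * x)) (Real.exp (-k * x) * (-k)) x := by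
      have := ((hasDerivAt_id x).const_mul (-k)).exp
      simpa using this
    exact h1.mul h2
  have hmonog : MonotoneOn g (Set.Iic x₀) := by
    apply monotoneOn_of_deriv_nonneg (convex_Iic x₀)
    · exact fun x _ => ((hgderiv x).continuousAt).continuousWithinAt
    · exact fun x _ => ((hgderiv x).differentiableAt).differentiableWithinAt
    · intro x hx
      rw [interior_Iic] at hx
      rw [(hgderiv x).deriv]
      have hθx := (hrange x).1
      have hθxδ : θ x < δ := hsmall x hx.le
      have hkey := key (θ x) hθx hθxδ.le
      rw [← hODE x] at hkey
      have hexp : 0 < Real.exp (-k * x) := Real.exp_pos _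
      nlinarith
  refine ⟨2 * π * Real.exp (-k * x₀), by positivity, ?_⟩
  intro x hx
  rcases le_or_gt x x₀ with hxx | hxx
  · have := hmonog (Set.mem_Iic.mpr hxx) (Set.mem_Iic.mpr le_rfl) hxx
    simp only [hg] at this
    have hb : θ x₀ * Real.exp (-k * x₀) ≤ 2 * π * Real.exp (-k * x₀) := by
      exact mul_le_mul_of_nonneg_right (hrange x₀).2.le (Real.exp_pos _).le
    have hc : θ x * Real.exp (-k * x) ≤ 2 * π * Real.exp (-k * x₀) := this.trans hb
    have hexp : 0 < Real.exp (-k * x) := Real.exp_pos _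
    have : θ x ≤ 2 * π * Real.exp (-k * x₀) * Real.exp (k * x) := by
      rw [show (-k) * x = -(k * x) by ring, Real.exp_neg] at hc
      have hpos : 0 < Real.exp (k * x) := Real.exp_pos _
      calc θ x = θ x * (Real.exp (k * x))⁻¹ * Real.exp (k * x) := by field_simp
        _ ≤ 2 * π * Real.exp (-k * x₀) * Real.exp (k * x) :=
            mul_le_mul_of_nonneg_right hc hpos.le
    simpa [hk] using this
  · have h2π : θ x < 2 * π := (hrange x).2
    have hle : Real.exp (k * x₀) ≤ Real.exp (k * x) :=
      Real.exp_le_exp.mpr (by nlinarith)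
    have hone : (1:ℝ) = Real.exp (-k * x₀) * Real.exp (k * x₀) := by
      rw [← Real.exp_add]; simp
    have : θ x ≤ 2 * π * Real.exp (-k * x₀) * Real.exp (k * x) := by
      calc θ x ≤ 2 * π := h2π.le
        _ = 2 * π * Real.exp (-k * x₀) * Real.exp (k * x₀) := by
            rw [mul_assoc, ← hone, mul_one]
        _ ≤ 2 * π * Real.exp (-k * x₀) * Real.exp (k * x) :=
            mul_le_mul_of_nonneg_left hle (by positivity)
    simpa [hk] using this
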